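/- Assume char(k) ≠ 2 and let (M, h) be a non-degenerate hermitian space over E of rank n with respect to ι. Then the unitary group U(M, h) := {σ ∈ Aut_E(M) : h(σu, σv) = h(u, v) for all u, v ∈ M} is isomorphic as a group to GL_n(K), where K := k[x]/(p) is the field obtained by adjoining a root of p to k. -/

import Mathlib

open Polynomial

/-- `p*(x) = p(0)⁻¹ x^(deg p) p(1/x)`. -/
noncomputable def pstar {k : Type*} [Field k] (p : k[X]) : k[X] :=
  C (p.eval 0)⁻¹ * p.reverse

/-- The unitary group of a hermitian form `h` on an `E`-module `M`, as a subgroup of the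
group of `E`-linear automorphisms of `M`. -/
def unitaryGroup {E : Type*} [CommRing E] {M : Type*} [AddCommGroup M] [Module E M]
    (h : M → M → E) : Subgroup (M ≃ₗ[E] M) where
  carrier := {σ | ∀ u v, h (σ u) (σ v) = h u v}
  one_mem' := fun _ _ => rfl
  mul_mem' := by
    intro a b ha hb u v
    have : ∀ w, (a * b) w = a (b w) := fun w => rfl
    rw [this, this, ha, hb]
  inv_mem' := by
    intro a ha u v
    have h1 : ∀ w, a (a⁻¹ w) = w := fun w => a.apply_symm_apply w
    conv_rhs => rw [← h1 u, ← h1 v]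
    exact (ha (a⁻¹ u) (a⁻¹ v)).symm

namespace AdjoinRoot

noncomputable def liftHom {R S : Type*} [CommRing R] [CommRing S] [Algebra R S] (f : R[X])
    (x : S) (hfx : aeval x f = 0) : AdjoinRoot f →ₐ[R] S :=
  liftAlgHom f (Algebra.ofId R S) x hfx

lemma liftHom_mk {R S : Type*} [CommRing R] [CommRing S] [Algebra R S] {f : R[X]}
    {x : S} {hfx : aeval x f = 0} {g : R[X]} : liftHom f x hfx (mk f g) = aeval x g := rfl

lemma liftHom_root {R S : Type*} [CommRing R] [CommRing S] [Algebra R S] (f : R[X])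
    {x : S} (hfx : aeval x f = 0) : liftHom f x hfx (root f) = x :=
  liftAlgHom_root _ _ _ _

end AdjoinRoot

section PolyAux

lemma pstar_def {k : Type*} [Field k] (p : k[X]) :
    pstar p = C (p.eval 0)⁻¹ * p.reverse := rfl

variable {k : Type*} [Field k] {p : k[X]}

lemma natTrailingDegree_eq_zero' (hp0 : p.eval 0 ≠ 0) : p.natTrailingDegree = 0 :=
  Polynomial.natTrailingDegree_eq_zero.mpr (Or.inr (by rwa [coeff_zero_eq_eval_zero]))

lemma trailingCoeff_eq_eval_zero (hp0 : p.eval 0 ≠ 0) : p.trailingCoeff = p.eval 0 := by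
  rw [Polynomial.trailingCoeff, natTrailingDegree_eq_zero' hp0, coeff_zero_eq_eval_zero]

lemma pstar_monic (hmonic : p.Monic) (hp0 : p.eval 0 ≠ 0) : (pstar p).Monic := by
  have : (pstar p).leadingCoeff = 1 := by
    rw [pstar_def, leadingCoeff_mul, leadingCoeff_C, reverse_leadingCoeff,
      trailingCoeff_eq_eval_zero hp0, inv_mul_cancel₀ hp0]
  exact this

lemma pstar_natDegree (hmonic : p.Monic) (hp0 : p.eval 0 ≠ 0) :
    (pstar p).natDegree = p.natDegree := by
  rw [pstar_def, natDegree_C_mul (inv_ne_zero hp0), reverse_natDegree,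
    natTrailingDegree_eq_zero' hp0, Nat.sub_zero]

lemma pstar_coprime (hmonic : p.Monic) (hirr : Irreducible p) (hp0 : p.eval 0 ≠ 0)
    (hps : pstar p ≠ p) : IsCoprime p (pstar p) := by
  refine hirr.coprime_iff_not_dvd.mpr fun hd => hps ?_
  exact (eq_of_dvd_of_natDegree_le_of_leadingCoeff hd
    (le_of_eq (pstar_natDegree hmonic hp0))
    (by rw [hmonic.leadingCoeff, (pstar_monic hmonic hp0).leadingCoeff])).symm

lemma crt_exists (hp0 : p.eval 0 ≠ 0)
    (ι : AdjoinRoot (p * pstar p) ≃ₐ[k] AdjoinRoot (p * pstar p))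
    (hι : ∀ a, ι (ι a) = a)
    (hιx : ι (AdjoinRoot.root (p * pstar p)) * AdjoinRoot.root (p * pstar p) = 1) :
    ∃ (π : AdjoinRoot (p * pstar p) →ₐ[k] AdjoinRoot p)
      (π' : AdjoinRoot (p * pstar p) →ₐ[k] AdjoinRoot (pstar p))
      (σ : AdjoinRoot p →ₐ[k] AdjoinRoot (pstar p))
      (σ' : AdjoinRoot (pstar p) →ₐ[k] AdjoinRoot p),
      (∀ f, π (AdjoinRoot.mk _ f) = AdjoinRoot.mk p f) ∧
      (∀ f, π' (AdjoinRoot.mk _ f) = AdjoinRoot.mk (pstar p) f) ∧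
      (∀ a, σ (π a) = π' (ι a)) ∧ (∀ a, σ' (π' a) = π (ι a)) ∧
      (∀ y, σ' (σ y) = y) := by
  have hcu : IsUnit (algebraMap k (AdjoinRoot (pstar p)) (p.eval 0)⁻¹) :=
    (isUnit_iff_ne_zero.mpr (inv_ne_zero hp0)).map _
  have hπ0 : aeval (AdjoinRoot.root p) (p * pstar p) = 0 := by
    rw [AdjoinRoot.aeval_eq, map_mul, AdjoinRoot.mk_self, zero_mul]
  have hπ'0 : aeval (AdjoinRoot.root (pstar p)) (p * pstar p) = 0 := by
    rw [AdjoinRoot.aeval_eq, map_mul, AdjoinRoot.mk_self, mul_zero]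
  set π : AdjoinRoot (p * pstar p) →ₐ[k] AdjoinRoot p := AdjoinRoot.liftHom _ _ hπ0 with hπdef
  set π' : AdjoinRoot (p * pstar p) →ₐ[k] AdjoinRoot (pstar p) :=
    AdjoinRoot.liftHom _ _ hπ'0 with hπ'def
  have hπmk : ∀ f, π (AdjoinRoot.mk _ f) = AdjoinRoot.mk p f := fun f => by
    rw [hπdef, AdjoinRoot.liftHom_mk, AdjoinRoot.aeval_eq]
  have hπ'mk : ∀ f, π' (AdjoinRoot.mk _ f) = AdjoinRoot.mk (pstar p) f := fun f => by
    rw [hπ'def, AdjoinRoot.liftHom_mk, AdjoinRoot.aeval_eq]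
  have hπx : π (AdjoinRoot.root (p * pstar p)) = AdjoinRoot.root p :=
    AdjoinRoot.liftHom_root _ hπ0
  have hπ'x : π' (AdjoinRoot.root (p * pstar p)) = AdjoinRoot.root (pstar p) :=
    AdjoinRoot.liftHom_root _ hπ'0
  set x := AdjoinRoot.root (p * pstar p) with hxdef
  have hw't' : π' (ι x) * AdjoinRoot.root (pstar p) = 1 := by
    have := congrArg π' hιx
    rwa [map_mul, map_one, hπ'x] at this
  have hwt : π (ι x) * AdjoinRoot.root p = 1 := by
    have := congrArg π hιx
    rwa [map_mul, map_one, hπx] at this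
  have haevalw' : aeval (π' (ι x)) p = 0 := by
    have h1 : aeval (AdjoinRoot.root (pstar p)) (pstar p) = 0 := by
      rw [AdjoinRoot.aeval_eq, AdjoinRoot.mk_self]
    have h2 : aeval (AdjoinRoot.root (pstar p)) p.reverse = 0 := by
      have h1' : algebraMap k (AdjoinRoot (pstar p)) (p.eval 0)⁻¹ *
          aeval (AdjoinRoot.root (pstar p)) p.reverse = 0 := by
        rw [← aeval_C (R := k) (A := AdjoinRoot (pstar p)), ← map_mul]; exact h1
      exact (hcu.mul_right_eq_zero).mp h1'
    letI : Invertible (π' (ι x)) :=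
      ⟨AdjoinRoot.root (pstar p), (mul_comm _ _).trans hw't', hw't'⟩
    have hiff := Polynomial.eval₂_reverse_eq_zero_iff
      (algebraMap k (AdjoinRoot (pstar p))) (π' (ι x)) p
    rw [← aeval_def, ← aeval_def] at hiff
    exact hiff.mp (by
      have : (⅟ (π' (ι x))) = AdjoinRoot.root (pstar p) := rfl
      rw [this]; exact h2)
  have haevalw : aeval (π (ι x)) (pstar p) = 0 := by
    have h1 : aeval (AdjoinRoot.root p) p = 0 := by
      rw [AdjoinRoot.aeval_eq, AdjoinRoot.mk_self]
    letI : Invertible (AdjoinRoot.root p) := ⟨π (ι x), hwt, (mul_comm _ _).trans hwt⟩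
    have hiff := Polynomial.eval₂_reverse_eq_zero_iff
      (algebraMap k (AdjoinRoot p)) (AdjoinRoot.root p) p
    rw [← aeval_def, ← aeval_def] at hiff
    have h2 : aeval (π (ι x)) p.reverse = 0 := by
      have : (⅟ (AdjoinRoot.root p)) = π (ι x) := rfl
      rw [← this]; exact hiff.mpr h1
    show aeval (π (ι x)) (C (p.eval 0)⁻¹ * p.reverse) = 0
    rw [map_mul, aeval_C, h2, mul_zero]
  set σ : AdjoinRoot p →ₐ[k] AdjoinRoot (pstar p) :=
    AdjoinRoot.liftHom p (π' (ι x)) haevalw' with hσdef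
  set σ' : AdjoinRoot (pstar p) →ₐ[k] AdjoinRoot p :=
    AdjoinRoot.liftHom (pstar p) (π (ι x)) haevalw with hσ'def
  have hσroot : σ (AdjoinRoot.root p) = π' (ι x) := AdjoinRoot.liftHom_root _ haevalw'
  have hσ'root : σ' (AdjoinRoot.root (pstar p)) = π (ι x) := AdjoinRoot.liftHom_root _ haevalw
  have hσ : ∀ a, σ (π a) = π' (ι a) := by
    intro a
    obtain ⟨f, rfl⟩ := AdjoinRoot.mk_surjective a
    calc σ (π (AdjoinRoot.mk _ f))
        = aeval (π' (ι x)) f := by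
          rw [hπmk, ← AdjoinRoot.aeval_eq, ← aeval_algHom_apply, hσroot]
      _ = π' (ι (AdjoinRoot.mk _ f)) := by
          rw [← AdjoinRoot.aeval_eq, ← aeval_algHom_apply ι, ← aeval_algHom_apply π']
  have hσ' : ∀ a, σ' (π' a) = π (ι a) := by
    intro a
    obtain ⟨f, rfl⟩ := AdjoinRoot.mk_surjective a
    calc σ' (π' (AdjoinRoot.mk _ f))
        = aeval (π (ι x)) f := by
          rw [hπ'mk, ← AdjoinRoot.aeval_eq, ← aeval_algHom_apply, hσ'root]
      _ = π (ι (AdjoinRoot.mk _ f)) := by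
          rw [← AdjoinRoot.aeval_eq, ← aeval_algHom_apply ι, ← aeval_algHom_apply π]
  have hσ'σ : ∀ y, σ' (σ y) = y := by
    intro y
    obtain ⟨f, rfl⟩ := AdjoinRoot.mk_surjective y
    rw [← hπmk f, hσ, hσ', hι]
  exact ⟨π, π', σ, σ', hπmk, hπ'mk, hσ, hσ', hσ'σ⟩

lemma crt_inj (hcop : IsCoprime p (pstar p))
    {π : AdjoinRoot (p * pstar p) →ₐ[k] AdjoinRoot p}
    {π' : AdjoinRoot (p * pstar p) →ₐ[k] AdjoinRoot (pstar p)}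
    (hπmk : ∀ f, π (AdjoinRoot.mk _ f) = AdjoinRoot.mk p f)
    (hπ'mk : ∀ f, π' (AdjoinRoot.mk _ f) = AdjoinRoot.mk (pstar p) f)
    (a : AdjoinRoot (p * pstar p)) (h1 : π a = 0) (h2 : π' a = 0) : a = 0 := by
  obtain ⟨f, rfl⟩ := AdjoinRoot.mk_surjective a
  rw [hπmk, AdjoinRoot.mk_eq_zero] at h1
  rw [hπ'mk, AdjoinRoot.mk_eq_zero] at h2
  rw [AdjoinRoot.mk_eq_zero]
  exact hcop.mul_dvd h1 h2

lemma crt_surj (hcop : IsCoprime p (pstar p))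
    {π : AdjoinRoot (p * pstar p) →ₐ[k] AdjoinRoot p}
    {π' : AdjoinRoot (p * pstar p) →ₐ[k] AdjoinRoot (pstar p)}
    (hπmk : ∀ f, π (AdjoinRoot.mk _ f) = AdjoinRoot.mk p f)
    (hπ'mk : ∀ f, π' (AdjoinRoot.mk _ f) = AdjoinRoot.mk (pstar p) f)
    (y : AdjoinRoot p) (z : AdjoinRoot (pstar p)) : ∃ a, π a = y ∧ π' a = z := by
  obtain ⟨a, b, hab⟩ := hcop
  obtain ⟨f, rfl⟩ := AdjoinRoot.mk_surjective y
  obtain ⟨g, rfl⟩ := AdjoinRoot.mk_surjective z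
  refine ⟨AdjoinRoot.mk _ (f * (b * pstar p) + g * (a * p)), ?_, ?_⟩
  · rw [hπmk, ← sub_eq_zero, ← map_sub, AdjoinRoot.mk_eq_zero]
    exact ⟨a * (g - f), by linear_combination f * hab⟩
  · rw [hπ'mk, ← sub_eq_zero, ← map_sub, AdjoinRoot.mk_eq_zero]
    exact ⟨b * (f - g), by linear_combination g * hab⟩

end PolyAux

section Helpers

lemma crt_isUnit {k : Type*} [Field k] {p : k[X]} (hcop : IsCoprime p (pstar p))
    {π : AdjoinRoot (p * pstar p) →ₐ[k] AdjoinRoot p}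
    {π' : AdjoinRoot (p * pstar p) →ₐ[k] AdjoinRoot (pstar p)}
    (hπmk : ∀ f, π (AdjoinRoot.mk _ f) = AdjoinRoot.mk p f)
    (hπ'mk : ∀ f, π' (AdjoinRoot.mk _ f) = AdjoinRoot.mk (pstar p) f)
    (a : AdjoinRoot (p * pstar p)) (h1 : IsUnit (π a)) (h2 : IsUnit (π' a)) : IsUnit a := by
  obtain ⟨b, hb1, hb2⟩ := crt_surj hcop hπmk hπ'mk (↑h1.unit⁻¹) (↑h2.unit⁻¹)
  refine IsUnit.of_mul_eq_one b ?_
  have h0 : a * b - 1 = 0 := by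
    apply crt_inj hcop hπmk hπ'mk
    · rw [map_sub, map_mul, map_one, hb1, h1.mul_val_inv, sub_self]
    · rw [map_sub, map_mul, map_one, hb2, h2.mul_val_inv, sub_self]
  rwa [sub_eq_zero] at h0

lemma isUnit_map_matrix {R S : Type*} [CommRing R] [CommRing S] {n' : Type*} [Fintype n']
    [DecidableEq n'] (f : R →+* S) {A : Matrix n' n' R} (hA : IsUnit A) :
    IsUnit (A.map (⇑f)) := by
  have := hA.map f.mapMatrix
  rwa [RingHom.mapMatrix_apply] at this

variable {E : Type*} [CommRing E] {M : Type*} [AddCommGroup M] [Module E M]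

lemma sesq_zero_left (h : M → M → E)
    (hsmul : ∀ (a : E) u v, h (a • u) v = a * h u v) (v : M) : h 0 v = 0 := by
  have := hsmul 0 0 v
  rwa [zero_smul, zero_mul] at this

lemma sesq_sum_left (h : M → M → E)
    (hadd : ∀ u₁ u₂ v, h (u₁ + u₂) v = h u₁ v + h u₂ v)
    (hsmul : ∀ (a : E) u v, h (a • u) v = a * h u v)
    {ν : Type*} (s : Finset ν) (f : ν → E) (u : ν → M) (v : M) :
    h (∑ i ∈ s, f i • u i) v = ∑ i ∈ s, f i * h (u i) v := by
  have key := map_sum (AddMonoidHom.mk' (fun w => h w v) (fun a b => hadd a b v))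
    (fun i => f i • u i) s
  rw [AddMonoidHom.mk'_apply] at key
  rw [key]
  exact Finset.sum_congr rfl fun i _ => hsmul (f i) (u i) v

lemma sesq_sum_right (h : M → M → E) (ιf : E →+* E)
    (hadd : ∀ u₁ u₂ v, h (u₁ + u₂) v = h u₁ v + h u₂ v)
    (hsmul : ∀ (a : E) u v, h (a • u) v = a * h u v)
    (hconj : ∀ u v, h v u = ιf (h u v))
    {ν : Type*} (s : Finset ν) (g : ν → E) (v : ν → M) (u : M) :
    h u (∑ j ∈ s, g j • v j) = ∑ j ∈ s, ιf (g j) * h u (v j) := by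
  rw [hconj, sesq_sum_left h hadd hsmul, map_sum]
  exact Finset.sum_congr rfl fun j _ => by rw [map_mul, ← hconj]

lemma sesq_sum_sum (h : M → M → E) (ιf : E →+* E)
    (hadd : ∀ u₁ u₂ v, h (u₁ + u₂) v = h u₁ v + h u₂ v)
    (hsmul : ∀ (a : E) u v, h (a • u) v = a * h u v)
    (hconj : ∀ u v, h v u = ιf (h u v))
    {ν : Type*} [Fintype ν] (f g : ν → E) (u v : ν → M) :
    h (∑ i, f i • u i) (∑ j, g j • v j) =
      ∑ i, ∑ j, f i * (ιf (g j) * h (u i) (v j)) := by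
  rw [sesq_sum_left h hadd hsmul]
  exact Finset.sum_congr rfl fun i _ => by
    rw [sesq_sum_right h ιf hadd hsmul hconj, Finset.mul_sum]

end Helpers

open Matrix in
set_option maxHeartbeats 1000000 in
theorem stmt_2 {k : Type*} [Field k] (hchar : (2 : k) ≠ 0) (p : k[X])
    (hmonic : p.Monic) (hirr : Irreducible p) (hp0 : p.eval 0 ≠ 0) (hps : pstar p ≠ p)
    (ι : AdjoinRoot (p * pstar p) ≃ₐ[k] AdjoinRoot (p * pstar p))
    (hι : ∀ a, ι (ι a) = a)
    (hιx : ι (AdjoinRoot.root (p * pstar p)) * AdjoinRoot.root (p * pstar p) = 1)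
    (M : Type*) [AddCommGroup M] [Module (AdjoinRoot (p * pstar p)) M]
    (h : M → M → AdjoinRoot (p * pstar p))
    (hadd : ∀ u₁ u₂ v, h (u₁ + u₂) v = h u₁ v + h u₂ v)
    (hsmul : ∀ (a : AdjoinRoot (p * pstar p)) u v, h (a • u) v = a * h u v)
    (hconj : ∀ u v, h v u = ι (h u v))
    (hnd : ∀ u, (∀ v, h u v = 0) → u = 0)
    (n : ℕ) (e : Module.Basis (Fin n) (AdjoinRoot (p * pstar p)) M) :
    Nonempty (unitaryGroup h ≃* Matrix.GeneralLinearGroup (Fin n) (AdjoinRoot p)) := by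
  classical
  -- Coprimality and the two projections
  have hcop := pstar_coprime hmonic hirr hp0 hps
  have hppne : p * pstar p ≠ 0 := mul_ne_zero hmonic.ne_zero (pstar_monic hmonic hp0).ne_zero
  obtain ⟨π, π', σ, σ', hπmk, hπ'mk, hσa, hσ'a, hσ'σa⟩ := crt_exists hp0 ι hι hιx
  -- ring hom versions
  set ιr : AdjoinRoot (p * pstar p) →+* AdjoinRoot (p * pstar p) :=
    ι.toRingEquiv.toRingHom with hιrdef
  set πr : AdjoinRoot (p * pstar p) →+* AdjoinRoot p := π.toRingHom with hπrdef
  set π'r : AdjoinRoot (p * pstar p) →+* AdjoinRoot (pstar p) := π'.toRingHom with hπ'rdef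
  set σr : AdjoinRoot p →+* AdjoinRoot (pstar p) := σ.toRingHom with hσrdef
  set σ'r : AdjoinRoot (pstar p) →+* AdjoinRoot p := σ'.toRingHom with hσ'rdef
  have hσf : ∀ a, σr (πr a) = π'r (ιr a) := hσa
  have hσ'f : ∀ a, σ'r (π'r a) = πr (ιr a) := hσ'a
  have hσ'σ : ∀ y, σ'r (σr y) = y := hσ'σa
  have hconjr : ∀ u v, h v u = ιr (h u v) := hconj
  have hinj : ∀ a, πr a = 0 → π'r a = 0 → a = 0 := crt_inj hcop hπmk hπ'mk
  have hsurjE : ∀ y z, ∃ a, πr a = y ∧ π'r a = z := crt_surj hcop hπmk hπ'mk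
  have hunitE : ∀ a, IsUnit (πr a) → IsUnit (π'r a) → IsUnit a := crt_isUnit hcop hπmk hπ'mk
  -- Gram matrix
  set G : Matrix (Fin n) (Fin n) (AdjoinRoot (p * pstar p)) :=
    Matrix.of (fun i j => h (e i) (e j)) with hGdef
  have hGapp : ∀ i j, G i j = h (e i) (e j) := fun i j => rfl
  have hherm : ∀ i j, ιr (G i j) = G j i := fun i j => (hconjr (e i) (e j)).symm
  -- matrix of an automorphism
  set Afun : (M ≃ₗ[AdjoinRoot (p * pstar p)] M) → Matrix (Fin n) (Fin n) (AdjoinRoot (p * pstar p)) :=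
    fun σe => LinearMap.toMatrixAlgEquiv e σe.toLinearMap with hAdef
  have hAfun_mul : ∀ a b, Afun (a * b) = Afun a * Afun b := by
    intro a b
    have hab : (a * b).toLinearMap = a.toLinearMap * b.toLinearMap := by ext w; rfl
    rw [hAdef]; dsimp only; rw [hab, _root_.map_mul]
  have hAfun_one : Afun 1 = 1 := by
    have h1 : (1 : M ≃ₗ[AdjoinRoot (p * pstar p)] M).toLinearMap =
        (1 : M →ₗ[AdjoinRoot (p * pstar p)] M) := rfl
    rw [hAdef]; dsimp only; rw [h1, _root_.map_one]
  have hAfun_unit : ∀ a, IsUnit (Afun a) := fun a =>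
    ⟨⟨Afun a, Afun a⁻¹,
      by rw [← hAfun_mul, mul_inv_cancel]; exact hAfun_one,
      by rw [← hAfun_mul, inv_mul_cancel]; exact hAfun_one⟩, rfl⟩
  have hAfun_inj : Function.Injective Afun := by
    intro a b hab
    rw [hAdef] at hab
    exact LinearEquiv.toLinearMap_injective ((LinearMap.toMatrixAlgEquiv e).injective hab)
  have hAfun_apply : ∀ σe (j : Fin n), σe (e j) = ∑ m, Afun σe m j • e m := by
    intro σe j
    conv_lhs => rw [← e.sum_repr (σe (e j))]
    exact Finset.sum_congr rfl fun m _ => by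
      rw [hAdef]; dsimp only; rw [LinearMap.toMatrixAlgEquiv_apply]; rfl
  -- membership in the unitary group as a matrix identity
  have hexp2 : ∀ (c d : Fin n → AdjoinRoot (p * pstar p)) (w y : Fin n → M),
      h (∑ i, c i • w i) (∑ j, d j • y j) =
        ∑ i, ∑ j, c i * (ιr (d j) * h (w i) (y j)) :=
    fun c d w y => sesq_sum_sum h ιr hadd hsmul hconjr c d w y
  have hprod : ∀ (A : Matrix (Fin n) (Fin n) (AdjoinRoot (p * pstar p))) i j,
      (Aᵀ * G * A.map (⇑ιr)) i j = ∑ l, ∑ m, A l i * (ιr (A m j) * G l m) := by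
    intro A i j
    rw [Matrix.mul_apply]
    simp only [Matrix.mul_apply, Matrix.transpose_apply, Matrix.map_apply, Finset.sum_mul]
    rw [Finset.sum_comm]
    exact Finset.sum_congr rfl fun l _ => Finset.sum_congr rfl fun m _ => by ring
  have hentry : ∀ σe (i j : Fin n),
      h (σe (e i)) (σe (e j)) = ∑ l, ∑ m, Afun σe l i * (ιr (Afun σe m j) * G l m) := by
    intro σe i j
    rw [hAfun_apply σe i, hAfun_apply σe j, hexp2]
    rfl
  have hrel_iff : ∀ σe, σe ∈ unitaryGroup h ↔
      (Afun σe)ᵀ * G * (Afun σe).map (⇑ιr) = G := by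
    intro σe
    constructor
    · intro hm
      ext i j
      rw [hprod _ i j, ← hentry σe i j]
      exact hm (e i) (e j)
    · intro hrel
      have hbasis : ∀ i j, h (σe (e i)) (σe (e j)) = G i j := fun i j => by
        rw [hentry σe i j, ← hprod (Afun σe) i j, hrel]
      intro u v
      conv_lhs => rw [← e.sum_repr u, ← e.sum_repr v]
      conv_rhs => rw [← e.sum_repr u, ← e.sum_repr v]
      rw [_root_.map_sum, _root_.map_sum]
      simp only [_root_.map_smul]
      rw [hexp2, hexp2]
      exact Finset.sum_congr rfl fun i _ => Finset.sum_congr rfl fun j _ => by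
        rw [hbasis i j, hGapp]
  -- the Gram matrix is invertible
  have hvm : ∀ (c : Fin n → AdjoinRoot (p * pstar p)) j,
      Matrix.vecMul c G j = ∑ i, c i * G i j := fun c j => by
    simp [Matrix.vecMul, dotProduct]
  have hGker : ∀ c, Matrix.vecMul c G = 0 → c = 0 := by
    intro c hc
    have hu : (∑ i, c i • e i) = 0 := by
      apply hnd
      intro v
      conv_lhs => rw [← e.sum_repr v]
      rw [hexp2, Finset.sum_comm]
      apply Finset.sum_eq_zero
      intro j _
      have h0 : ∑ i, c i * h (e i) (e j) = 0 := by
        have h5 := congrFun hc j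
        rw [hvm] at h5
        exact h5
      calc ∑ i, c i * (ιr ((e.repr v) j) * h (e i) (e j))
          = ιr ((e.repr v) j) * ∑ i, c i * h (e i) (e j) := by
            rw [Finset.mul_sum]
            exact Finset.sum_congr rfl fun i _ => by ring
        _ = 0 := by rw [h0, mul_zero]
    funext j
    have h3 := congrFun (e.repr_sum_self c) j
    rw [hu] at h3
    simpa using h3.symm
  haveI hfin : Module.Finite k (AdjoinRoot (p * pstar p)) :=
    Module.Finite.of_basis (AdjoinRoot.powerBasis hppne).basis
  have hGunit : IsUnit G := by
    have hLinj : Function.Injective ((Matrix.vecMulLinear G).restrictScalars k) := by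
      intro c d hcd
      have h6 : Matrix.vecMul c G = Matrix.vecMul d G := hcd
      have h4 : Matrix.vecMul (c - d) G = 0 := by
        rw [Matrix.sub_vecMul, h6, sub_self]
      exact sub_eq_zero.mp (hGker _ h4)
    have hLsurj := LinearMap.injective_iff_surjective.mp hLinj
    have hex : ∀ jv : Fin n → AdjoinRoot (p * pstar p), ∃ cj, Matrix.vecMul cj G = jv := by
      intro jv
      obtain ⟨c, hc⟩ := hLsurj jv
      exact ⟨c, hc⟩
    choose Crow hCrow using hex
    have hCG : (Matrix.of fun j i => Crow (Pi.single j 1) i) * G = 1 := by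
      ext j i
      rw [Matrix.mul_apply]
      have h5 := congrFun (hCrow (Pi.single j 1)) i
      rw [hvm] at h5
      rw [show ∑ m, (Matrix.of fun j i => Crow (Pi.single j 1) i) j m * G m i
        = ∑ m, Crow (Pi.single j 1) m * G m i from rfl, h5]
      simp [Matrix.one_apply, Pi.single_apply, eq_comm]
    exact IsUnit.of_mul_eq_one _ (mul_eq_one_comm.mp hCG)
  -- pushing the unitary relation to the two components
  have hpush : ∀ A : Matrix (Fin n) (Fin n) (AdjoinRoot (p * pstar p)),
      Aᵀ * G * A.map (⇑ιr) = G →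
      (A.map (⇑π'r))ᵀ * (G.map (⇑π'r)) * ((A.map (⇑πr)).map (⇑σr)) = G.map (⇑π'r) := by
    intro A rel
    have h7 := congrArg
      (fun X : Matrix (Fin n) (Fin n) (AdjoinRoot (p * pstar p)) => X.map (⇑π'r)) rel
    rw [Matrix.map_mul, Matrix.map_mul, Matrix.transpose_map] at h7
    have h8 : (A.map (⇑πr)).map (⇑σr) = (A.map (⇑ιr)).map (⇑π'r) := by
      rw [Matrix.map_map, Matrix.map_map,
        show (⇑σr ∘ ⇑πr : _ → _) = ⇑π'r ∘ ⇑ιr from funext fun a => hσf a]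
    rw [h8]
    exact h7
  -- the homomorphism to GL_n(K)
  set ψ : unitaryGroup h →* Matrix (Fin n) (Fin n) (AdjoinRoot p) :=
    { toFun := fun s => (Afun ↑s).map (⇑πr),
      map_one' := by
        show (Afun ↑(1 : unitaryGroup h)).map (⇑πr) = 1
        rw [show ((1 : unitaryGroup h) : M ≃ₗ[AdjoinRoot (p * pstar p)] M) = 1 from rfl,
          hAfun_one]
        exact Matrix.map_one _ (map_zero πr) (map_one πr)
      map_mul' := by
        intro s t
        show (Afun ↑(s * t)).map (⇑πr) = (Afun ↑s).map (⇑πr) * (Afun ↑t).map (⇑πr)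
        rw [show ((s * t : unitaryGroup h) : M ≃ₗ[AdjoinRoot (p * pstar p)] M)
          = (↑s : M ≃ₗ[AdjoinRoot (p * pstar p)] M) * (↑t : M ≃ₗ[AdjoinRoot (p * pstar p)] M)
          from rfl, hAfun_mul, Matrix.map_mul] } with hψdef
  set Φ : unitaryGroup h →* (Matrix (Fin n) (Fin n) (AdjoinRoot p))ˣ := ψ.toHomUnits with hΦdef
  have hΦval : ∀ s, ((Φ s : (Matrix (Fin n) (Fin n) (AdjoinRoot p))ˣ) : _)
      = (Afun ↑s).map (⇑πr) := fun s => rfl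
  -- injectivity
  have hΦinj : Function.Injective Φ := by
    intro s t hst
    have hval : (Afun ↑s).map (⇑πr) = (Afun ↑t).map (⇑πr) := by
      have h12 := congrArg Units.val hst
      exact h12
    have hs2 := hpush _ ((hrel_iff ↑s).mp s.2)
    have ht2 := hpush _ ((hrel_iff ↑t).mp t.2)
    rw [hval] at hs2
    have hXu : IsUnit (((Afun ↑t).map (⇑πr)).map (⇑σr)) :=
      isUnit_map_matrix σr (isUnit_map_matrix πr (hAfun_unit ↑t))
    have hG2u : IsUnit (G.map (⇑π'r)) := isUnit_map_matrix π'r hGunit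
    have h9 := hG2u.mul_right_cancel (hXu.mul_right_cancel (hs2.trans ht2.symm))
    have h11 : (Afun ↑s).map (⇑π'r) = (Afun ↑t).map (⇑π'r) := by
      have h10 := congrArg Matrix.transpose h9
      rwa [Matrix.transpose_transpose, Matrix.transpose_transpose] at h10
    have hAB : Afun ↑s = Afun ↑t := by
      ext i j
      have e1 : πr (Afun (↑s) i j) = πr (Afun (↑t) i j) := congrFun (congrFun hval i) j
      have e2 : π'r (Afun (↑s) i j) = π'r (Afun (↑t) i j) := congrFun (congrFun h11 i) j
      have h13 := hinj (Afun (↑s) i j - Afun (↑t) i j)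
        (by rw [map_sub, e1, sub_self]) (by rw [map_sub, e2, sub_self])
      exact sub_eq_zero.mp h13
    exact Subtype.ext (hAfun_inj hAB)
  -- surjectivity
  have hΦsurj : Function.Surjective Φ := by
    intro N
    set Nv : Matrix (Fin n) (Fin n) (AdjoinRoot p) := ↑N with hNvdef
    set Su : Matrix (Fin n) (Fin n) (AdjoinRoot (pstar p)) := Nv.map (⇑σr) with hSudef
    set G2 : Matrix (Fin n) (Fin n) (AdjoinRoot (pstar p)) := G.map (⇑π'r) with hG2def
    have hNu : IsUnit Nv := N.isUnit
    have hG2u : IsUnit G2 := isUnit_map_matrix π'r hGunit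
    have hG2det : IsUnit G2.det := (Matrix.isUnit_iff_isUnit_det _).mp hG2u
    have hSuu : IsUnit Su := isUnit_map_matrix σr hNu
    have hSudet : IsUnit Su.det := (Matrix.isUnit_iff_isUnit_det _).mp hSuu
    set N' : Matrix (Fin n) (Fin n) (AdjoinRoot (pstar p)) := (G2 * Su⁻¹ * G2⁻¹)ᵀ with hN'def
    have hrelN' : N'ᵀ * G2 * Su = G2 := by
      rw [hN'def, Matrix.transpose_transpose, Matrix.mul_assoc (G2 * Su⁻¹),
        Matrix.nonsing_inv_mul _ hG2det, Matrix.mul_one, Matrix.mul_assoc,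
        Matrix.nonsing_inv_mul _ hSudet, Matrix.mul_one]
    have hN'unit : IsUnit N' := by
      have h1 : (G2 * Su⁻¹ * G2⁻¹) * (G2 * Su * G2⁻¹) = 1 := by
        calc (G2 * Su⁻¹ * G2⁻¹) * (G2 * Su * G2⁻¹)
            = G2 * (Su⁻¹ * (G2⁻¹ * (G2 * (Su * G2⁻¹)))) := by
              simp only [Matrix.mul_assoc]
          _ = G2 * (Su⁻¹ * (Su * G2⁻¹)) := by
              rw [Matrix.nonsing_inv_mul_cancel_left _ _ hG2det]
          _ = G2 * G2⁻¹ := by rw [Matrix.nonsing_inv_mul_cancel_left _ _ hSudet]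
          _ = 1 := Matrix.mul_nonsing_inv _ hG2det
      have h2 : N' * (G2 * Su * G2⁻¹)ᵀ = 1 := by
        rw [hN'def, ← Matrix.transpose_mul, mul_eq_one_comm.mp h1, Matrix.transpose_one]
      exact IsUnit.of_mul_eq_one _ h2
    obtain ⟨M0, hM0π, hM0π'⟩ : ∃ M0 : Matrix (Fin n) (Fin n) (AdjoinRoot (p * pstar p)),
        M0.map (⇑πr) = Nv ∧ M0.map (⇑π'r) = N' := by
      choose f hf1 hf2 using hsurjE
      exact ⟨Matrix.of fun i j => f (Nv i j) (N' i j),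
        by ext i j; exact hf1 _ _, by ext i j; exact hf2 _ _⟩
    have hM0u : IsUnit M0 := by
      rw [Matrix.isUnit_iff_isUnit_det]
      apply hunitE
      · rw [RingHom.map_det, RingHom.mapMatrix_apply, hM0π]
        exact (Matrix.isUnit_iff_isUnit_det _).mp hNu
      · rw [RingHom.map_det, RingHom.mapMatrix_apply, hM0π']
        exact (Matrix.isUnit_iff_isUnit_det _).mp hN'unit
    have hrelM0 : M0ᵀ * G * M0.map (⇑ιr) = G := by
      have eπ' : (M0ᵀ * G * M0.map (⇑ιr)).map (⇑π'r) = G.map (⇑π'r) := by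
        rw [Matrix.map_mul, Matrix.map_mul, Matrix.transpose_map, hM0π']
        have h8 : (M0.map (⇑ιr)).map (⇑π'r) = Su := by
          rw [Matrix.map_map, hSudef, ← hM0π, Matrix.map_map,
            show (⇑π'r ∘ ⇑ιr : _ → _) = ⇑σr ∘ ⇑πr from funext fun a => (hσf a).symm]
        rw [h8, ← hG2def]
        exact hrelN'
      have eπ : (M0ᵀ * G * M0.map (⇑ιr)).map (⇑πr) = G.map (⇑πr) := by
        rw [Matrix.map_mul, Matrix.map_mul, Matrix.transpose_map, hM0π]
        have h8 : (M0.map (⇑ιr)).map (⇑πr) = N'.map (⇑σ'r) := by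
          rw [Matrix.map_map, ← hM0π', Matrix.map_map,
            show (⇑πr ∘ ⇑ιr : _ → _) = ⇑σ'r ∘ ⇑π'r from funext fun a => (hσ'f a).symm]
        rw [h8]
        have h9 : (N'.map (⇑σ'r))ᵀ * (G.map (⇑πr))ᵀ * Nv = (G.map (⇑πr))ᵀ := by
          have h10 := congrArg
            (fun X : Matrix (Fin n) (Fin n) (AdjoinRoot (pstar p)) => X.map (⇑σ'r)) hrelN'
          rw [Matrix.map_mul, Matrix.map_mul, Matrix.transpose_map] at h10
          have hg : G2.map (⇑σ'r) = (G.map (⇑πr))ᵀ := by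
            rw [hG2def, Matrix.map_map]
            ext i j
            show σ'r (π'r (G i j)) = πr (G j i)
            rw [hσ'f, hherm]
          have hsu : Su.map (⇑σ'r) = Nv := by
            rw [hSudef, Matrix.map_map]
            ext i j
            exact hσ'σ _
          rwa [hg, hsu] at h10
        have h11 := congrArg Matrix.transpose h9
        simp only [Matrix.transpose_mul, Matrix.transpose_transpose] at h11
        rw [← Matrix.mul_assoc] at h11
        exact h11
      ext i j
      have e1 : πr ((M0ᵀ * G * M0.map (⇑ιr)) i j) = πr (G i j) := congrFun (congrFun eπ i) j
      have e2 : π'r ((M0ᵀ * G * M0.map (⇑ιr)) i j) = π'r (G i j) := congrFun (congrFun eπ' i) j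
      have h13 := hinj ((M0ᵀ * G * M0.map (⇑ιr)) i j - G i j)
        (by rw [map_sub, e1, sub_self]) (by rw [map_sub, e2, sub_self])
      exact sub_eq_zero.mp h13
    set lin0 := (LinearMap.toMatrixAlgEquiv e).symm M0 with hlin0
    set lin1 := (LinearMap.toMatrixAlgEquiv e).symm (↑hM0u.unit⁻¹) with hlin1
    have hc1 : lin0 ∘ₗ lin1 = LinearMap.id := by
      rw [hlin0, hlin1, ← Module.End.mul_eq_comp, ← _root_.map_mul, hM0u.mul_val_inv,
        _root_.map_one]
      rfl
    have hc2 : lin1 ∘ₗ lin0 = LinearMap.id := by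
      rw [hlin0, hlin1, ← Module.End.mul_eq_comp, ← _root_.map_mul, hM0u.val_inv_mul,
        _root_.map_one]
      rfl
    set σ0 : M ≃ₗ[AdjoinRoot (p * pstar p)] M := LinearEquiv.ofLinear lin0 lin1 hc1 hc2
      with hσ0
    have hσ0mat : Afun σ0 = M0 := by
      rw [hAdef]
      dsimp only
      rw [hσ0, show (LinearEquiv.ofLinear lin0 lin1 hc1 hc2).toLinearMap = lin0 from rfl,
        hlin0]
      exact (LinearMap.toMatrixAlgEquiv e).apply_symm_apply M0
    have hmem : σ0 ∈ unitaryGroup h := by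
      rw [hrel_iff, hσ0mat]
      exact hrelM0
    refine ⟨⟨σ0, hmem⟩, ?_⟩
    apply Units.ext
    show (Afun σ0).map (⇑πr) = ↑N
    rw [hσ0mat, hM0π]
  exact ⟨MulEquiv.ofBijective Φ ⟨hΦinj, hΦsurj⟩⟩
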